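/- Fix n ≥ 2 and consider the simple graph whose vertex set is {x ∈ ℤ^n : F_n(x) = 0}, with two solutions adjacent if and only if they differ in exactly one coordinate. This graph is acyclic (i.e., it contains no cycles; every connected component is a tree). -/

import Mathlib

open Finset

def F {n : ℕ} (x : Fin n → ℤ) : ℤ :=
  (∑ i, x i) ^ 2 - (∑ i, x i) - 4 * ∑ i, ∑ j, if i < j then x i * x j else 0

/-- The graph on the integral solutions of `F_n = 0`, two solutions being adjacent
iff they differ in exactly one coordinate. -/
def solGraph (n : ℕ) : SimpleGraph {x : Fin n → ℤ // F x = 0} where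
  Adj x y := ∃ k, x.1 k ≠ y.1 k ∧ ∀ i, i ≠ k → x.1 i = y.1 i
  symm := by
    constructor
    rintro x y ⟨k, hk, h⟩
    exact ⟨k, hk.symm, fun i hi => (h i hi).symm⟩
  loopless := by
    constructor
    rintro x ⟨k, hk, -⟩
    exact hk rfl

/-! ### Graph-theoretic part: a potential function criterion for acyclicity -/

open SimpleGraph in
theorem no_max_cycle {V : Type*} (G : SimpleGraph V) (f : V → ℤ)
    (h1 : ∀ x y, G.Adj x y → f x ≠ f y)
    (h2 : ∀ x y z, G.Adj x y → G.Adj x z → f y < f x → f z < f x → y = z)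
    (u : V) (c : G.Walk u u) (hc : c.IsCycle)
    (hmax : ∀ w ∈ c.support, f w ≤ f u) : False := by
  cases c with
  | nil => exact hc.ne_nil rfl
  | @cons _ b _ h p =>
    have hlen : 3 ≤ p.length + 1 := by
      have := hc.three_le_length
      simpa using this
    have hfb : f b < f u := by
      refine lt_of_le_of_ne (hmax b ?_) (h1 u b h).symm
      simp [Walk.support_cons]
    cases hq : (Walk.cons h p).reverse with
    | nil =>
      have := congrArg Walk.length hq
      simp at this
    | @cons _ d _ h' q =>
      have hfd : f d < f u := by
        refine lt_of_le_of_ne (hmax d ?_) (h1 u d h').symm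
        have : d ∈ (Walk.cons h p).reverse.support := by
          rw [hq]; simp [Walk.support_cons]
        rwa [Walk.support_reverse, List.mem_reverse] at this
      have hbd : b = d := h2 u b d h h' hfb hfd
      have hE : (Walk.cons h p).edges.reverse = s(u, d) :: q.edges := by
        rw [← Walk.edges_reverse, hq, Walk.edges_cons]
      have hE' : s(u, b) :: p.edges = (s(u, d) :: q.edges).reverse := by
        rw [← hE, List.reverse_reverse, Walk.edges_cons]
      have hqlen : q.edges ≠ [] := by
        intro hnil
        have := congrArg List.length hE'
        simp only [hnil, Walk.length_edges, List.length_cons, List.length_reverse, List.length_nil] at this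
        omega
      obtain ⟨y, ys, hys⟩ := List.exists_cons_of_ne_nil
        (by simpa using (List.reverse_eq_nil_iff.not.mpr hqlen) : q.edges.reverse ≠ [])
      have : s(u, b) :: p.edges = y :: (ys ++ [s(u, d)]) := by
        rw [hE', List.reverse_cons, hys]; simp
      have hmem : s(u, d) ∈ p.edges := by
        have htail := congrArg List.tail this
        simp at htail
        rw [htail]
        simp
      rw [← hbd] at hmem
      have := hc.edges_nodup
      rw [Walk.edges_cons] at this
      exact (List.nodup_cons.mp this).1 hmem

open SimpleGraph in
theorem acyclic_of_pot {V : Type*} (G : SimpleGraph V) (f : V → ℤ)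
    (h1 : ∀ x y, G.Adj x y → f x ≠ f y)
    (h2 : ∀ x y z, G.Adj x y → G.Adj x z → f y < f x → f z < f x → y = z) :
    G.IsAcyclic := by
  intro v c hc
  classical
  obtain ⟨u, hu, hmax⟩ := Finset.exists_max_image c.support.toFinset f
    ⟨v, by simp [Walk.start_mem_support]⟩
  rw [List.mem_toFinset] at hu
  refine no_max_cycle G f h1 h2 u (c.rotate u hu) (hc.rotate hu) ?_
  intro w hw
  rcases (Walk.mem_support_iff _).mp hw with rfl | hw'
  · exact le_refl _
  · have hmem : w ∈ c.support.tail := ((Walk.support_rotate c u hu).mem_iff).mp hw'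
    exact hmax w (List.mem_toFinset.mpr (List.mem_of_mem_tail hmem))

/-! ### Algebraic part -/

lemma sq_sum_eq {n : ℕ} (x : Fin n → ℤ) :
    (∑ i, x i)^2 = ∑ i, (x i)^2 + 2 * ∑ i, ∑ j, if i < j then x i * x j else 0 := by
  have key : ∀ i j : Fin n, x i * x j =
      (if i < j then x i * x j else 0) + (if j < i then x i * x j else 0) +
      (if i = j then x i * x j else 0) := by
    intro i j
    rcases lt_trichotomy i j with h | h | h
    · simp [h, h.ne, not_lt_of_gt h]
    · simp [h, lt_irrefl]
    · simp [h, h.ne', not_lt_of_gt h]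
  have hswap : (∑ i, ∑ j, if j < i then x i * x j else 0)
      = ∑ i, ∑ j, if i < j then x i * x j else 0 := by
    rw [Finset.sum_comm]
    apply Finset.sum_congr rfl; intro i _
    apply Finset.sum_congr rfl; intro j _
    rcases lt_or_ge i j with h | h
    · simp [h, mul_comm]
    · have h1 : ¬ i < j := not_lt_of_ge h
      by_cases hji : j < i
      · simp [h1, hji, mul_comm]
      · simp [h1, hji]
  have hdiag : (∑ i, ∑ j, if i = j then x i * x j else 0) = ∑ i, (x i)^2 := by
    apply Finset.sum_congr rfl; intro i _
    simp [Finset.sum_ite_eq, sq]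
  calc (∑ i, x i)^2 = ∑ i, ∑ j, x i * x j := by rw [sq, Finset.sum_mul_sum]
    _ = ∑ i, ∑ j, ((if i < j then x i * x j else 0) + (if j < i then x i * x j else 0) +
        (if i = j then x i * x j else 0)) := by
        apply Finset.sum_congr rfl; intro i _
        apply Finset.sum_congr rfl; intro j _
        exact key i j
    _ = (∑ i, ∑ j, if i < j then x i * x j else 0) +
        (∑ i, ∑ j, if j < i then x i * x j else 0) +
        (∑ i, ∑ j, if i = j then x i * x j else 0) := by
        simp [Finset.sum_add_distrib]
    _ = ∑ i, (x i)^2 + 2 * ∑ i, ∑ j, if i < j then x i * x j else 0 := by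
        rw [hswap, hdiag]; ring

lemma F_eq {n : ℕ} (x : Fin n → ℤ) :
    F x = 2 * ∑ i, (x i)^2 - (∑ i, x i)^2 - ∑ i, x i := by
  unfold F
  linear_combination 2 * sq_sum_eq x

lemma sum_agree {n : ℕ} (x y : Fin n → ℤ) (g : ℤ → ℤ) (k : Fin n)
    (hag : ∀ i, i ≠ k → x i = y i) :
    ∑ i, g (y i) = g (y k) - g (x k) + ∑ i, g (x i) := by
  rw [← Finset.add_sum_erase _ (fun i => g (y i)) (mem_univ k),
      ← Finset.add_sum_erase _ (fun i => g (x i)) (mem_univ k)]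
  have : ∑ i ∈ univ.erase k, g (y i) = ∑ i ∈ univ.erase k, g (x i) :=
    Finset.sum_congr rfl fun i hi => by rw [hag i (Finset.ne_of_mem_erase hi)]
  rw [this]; ring

lemma neighbor_val {n : ℕ} (x y : Fin n → ℤ) (hx : F x = 0) (hy : F y = 0) (k : Fin n)
    (hne : x k ≠ y k) (hag : ∀ i, i ≠ k → x i = y i) :
    y k = 2 * (∑ i, x i) + 1 - 3 * x k := by
  rw [F_eq] at hx hy
  have hS := sum_agree x y id k hag
  have hQ := sum_agree x y (fun t => t^2) k hag
  simp only [id] at hS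
  set a := x k with ha
  set b := y k with hb
  have hprod : (a - b) * ((a + b) - (2 * (∑ i, x i) - 2 * a + 1)) = 0 := by
    linear_combination hx - hy + (2 : ℤ) * hQ - ((∑ i, y i) + (∑ i, x i) + 1) * hS
      + (a - b) * hS
  rcases mul_eq_zero.mp hprod with h | h
  · exact absurd (by linarith) hne
  · linarith

lemma factor_sign_pos (t a : ℤ) (htp : 0 < t) (hu : (t-2*a)*(t-4*a) < 0) : t - 4*a < 0 := by
  nlinarith [sq_nonneg (t - 4*a)]

lemma factor_sign_neg (t a : ℤ) (htn : t < 0) (hu : (t-2*a)*(t-4*a) < 0) : 0 < t - 4*a := by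
  nlinarith [sq_nonneg (t - 4*a)]

lemma two_descents_false (s a e R : ℤ) (hR : 0 ≤ R)
    (heq : 2*(a^2 + e^2 + R) = s^2 + s)
    (h1 : (2*s+1-3*a)^2 < a^2) (h2 : (2*s+1-3*e)^2 < e^2) : False := by
  set t := 2*s+1 with ht
  have hu1 : (t - 2*a) * (t - 4*a) < 0 := by nlinarith [h1]
  have hu2 : (t - 2*e) * (t - 4*e) < 0 := by nlinarith [h2]
  have heq' : 8*(a^2 + e^2) = t^2 - 1 - 8*R := by linear_combination 4 * heq - (t + 2*s + 1) * ht
  rcases lt_trichotomy t 0 with htn | htz | htp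
  · have ha1 := factor_sign_neg t a htn hu1
    have he1 := factor_sign_neg t e htn hu2
    have key : 0 < (t - 2*(a+e)) * (-t - 2*(a+e)) :=
      mul_pos (by linarith) (by linarith)
    nlinarith [sq_nonneg (a - e)]
  · omega
  · have ha1 := factor_sign_pos t a htp hu1
    have he1 := factor_sign_pos t e htp hu2
    have key : 0 < (2*(a+e) - t) * (2*(a+e) + t) :=
      mul_pos (by linarith) (by linarith)
    nlinarith [sq_nonneg (a - e)]

/-- The solution graph of `F_n = 0` is acyclic: every connected component is a tree. -/
theorem stmt_6 (n : ℕ) (hn : 2 ≤ n) : (solGraph n).IsAcyclic := by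
  apply acyclic_of_pot (solGraph n) (fun v => ∑ i, (v.1 i)^2)
  · rintro ⟨x, hx⟩ ⟨y, hy⟩ hadj heq
    obtain ⟨k, hne, hag⟩ : ∃ k, x k ≠ y k ∧ ∀ i, i ≠ k → x i = y i := hadj
    have hQ := sum_agree x y (fun t => t^2) k hag
    simp only at hQ heq
    have hb := neighbor_val x y hx hy k hne hag
    have h0 : (y k - x k) * (y k + x k) = 0 := by
      have hsq : (y k)^2 = (x k)^2 := by linarith
      linear_combination hsq
    rcases mul_eq_zero.mp h0 with h | h
    · exact hne (by linarith)
    · set s := ∑ i, x i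
      set a := x k
      set b := y k
      omega
  · rintro ⟨x, hx⟩ ⟨y, hy⟩ ⟨z, hz⟩ hadjy hadjz hfy hfz
    obtain ⟨k, hky, hagy⟩ : ∃ k, x k ≠ y k ∧ ∀ i, i ≠ k → x i = y i := hadjy
    obtain ⟨l, hkz, hagz⟩ : ∃ l, x l ≠ z l ∧ ∀ i, i ≠ l → x i = z i := hadjz
    have hyk := neighbor_val x y hx hy k hky hagy
    have hzl := neighbor_val x z hx hz l hkz hagz
    by_cases hkl : k = l
    · subst hkl
      refine Subtype.ext (funext fun i => ?_)
      show y i = z i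
      by_cases hik : i = k
      · subst hik; rw [hyk, hzl]
      · rw [← hagy i hik, ← hagz i hik]
    · exfalso
      simp only at hfy hfz
      have hQy := sum_agree x y (fun t => t^2) k hagy
      have hQz := sum_agree x z (fun t => t^2) l hagz
      have hdy : (y k)^2 < (x k)^2 := by linarith
      have hdz : (z l)^2 < (x l)^2 := by linarith
      rw [hyk] at hdy
      rw [hzl] at hdz
      have hl : l ∈ Finset.univ.erase k :=
        Finset.mem_erase.mpr ⟨fun h => hkl h.symm, Finset.mem_univ l⟩
      have hsplit : ∑ i, (x i)^2 =
          (x k)^2 + ((x l)^2 + ∑ i ∈ (Finset.univ.erase k).erase l, (x i)^2) := by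
        rw [Finset.add_sum_erase _ (fun i => (x i)^2) hl,
            Finset.add_sum_erase _ (fun i => (x i)^2) (mem_univ k)]
      have hxe : 2 * ∑ i, (x i)^2 - (∑ i, x i)^2 - ∑ i, x i = 0 := by rw [← F_eq]; exact hx
      refine two_descents_false (∑ i, x i) (x k) (x l)
        (∑ i ∈ (Finset.univ.erase k).erase l, (x i)^2) ?_ ?_ hdy hdz
      · exact Finset.sum_nonneg fun i _ => sq_nonneg _
      · linarith [hsplit, hxe]
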